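/- Let F be the field with 2 elements and let 𝒰₂ = { [[x, 0],[y, x+1]] : x, y ∈ F } ⊆ Mat_2(F). Then 𝒰₂ is an affine subspace of dimension 2, every matrix in 𝒰₂ has rank at most 1, and 0 ∉ 𝒰₂ (so 𝒰₂ is not a linear subspace). -/

import Mathlib

/-- The exceptional space `𝒰₂` over `𝔽₂`. -/
def U2 : Set (Matrix (Fin 2) (Fin 2) (ZMod 2)) :=
  {M | ∃ x y : ZMod 2, M = !![x, 0; y, x + 1]}

/-- `𝒰₂` is an affine subspace of dimension 2, every matrix in it has rank at
most 1, and it does not contain 0 (hence it is not a linear subspace). -/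
theorem U2_properties :
    (∃ (A : Matrix (Fin 2) (Fin 2) (ZMod 2))
        (V : Submodule (ZMod 2) (Matrix (Fin 2) (Fin 2) (ZMod 2))),
        Module.finrank (ZMod 2) V = 2 ∧
        U2 = (A + ·) '' (V : Set (Matrix (Fin 2) (Fin 2) (ZMod 2)))) ∧
    (∀ M ∈ U2, Matrix.rank M ≤ 1) ∧
    (0 : Matrix (Fin 2) (Fin 2) (ZMod 2)) ∉ U2 := by
  refine ⟨?_, ?_, ?_⟩
  · let L : (ZMod 2 × ZMod 2) →ₗ[ZMod 2] Matrix (Fin 2) (Fin 2) (ZMod 2) :=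
      { toFun := fun p => !![p.1, 0; p.2, p.1]
        map_add' := by
          intro p q
          ext i j
          fin_cases i <;> fin_cases j <;> simp
        map_smul' := by
          intro c p
          ext i j
          fin_cases i <;> fin_cases j <;> simp }
    refine ⟨!![0, 0; 0, 1], LinearMap.range L, ?_, ?_⟩
    · have hinj : Function.Injective L := by
        rw [← LinearMap.ker_eq_bot]
        ext p
        simp only [LinearMap.mem_ker, Submodule.mem_bot]
        constructor
        · intro h
          have h1 := congrFun (congrFun h 0) 0
          have h2 := congrFun (congrFun h 1) 0
          simp [L] at h1 h2
          exact Prod.ext h1 h2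
        · rintro rfl
          ext i j
          fin_cases i <;> fin_cases j <;> simp [L]
      rw [LinearMap.finrank_range_of_inj hinj]
      simp
    · ext M
      simp only [U2, Set.mem_setOf_eq, Set.mem_image, SetLike.mem_coe,
        LinearMap.mem_range]
      constructor
      · rintro ⟨x, y, rfl⟩
        refine ⟨!![x, 0; y, x], ⟨(x, y), rfl⟩, ?_⟩
        ext i j
        fin_cases i <;> fin_cases j <;> simp [add_comm]
      · rintro ⟨_, ⟨⟨x, y⟩, rfl⟩, rfl⟩
        refine ⟨x, y, ?_⟩
        ext i j
        fin_cases i <;> fin_cases j <;> simp [L, add_comm]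
  · rintro M ⟨x, y, rfl⟩
    have hx : x = 0 ∨ x = 1 := by fin_cases x <;> [exact Or.inl rfl; exact Or.inr rfl]
    rcases hx with rfl | rfl
    · have : !![(0 : ZMod 2), 0; y, 0 + 1] = !![(0:ZMod 2); 1] * !![y, (1:ZMod 2)] := by
        ext i j; fin_cases i <;> fin_cases j <;> simp [Matrix.mul_apply, Fin.sum_univ_succ]
      rw [this]
      calc Matrix.rank (!![(0:ZMod 2); 1] * !![y, (1:ZMod 2)])
          ≤ Matrix.rank (!![(0 : ZMod 2); 1]) := Matrix.rank_mul_le_left _ _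
        _ ≤ Fintype.card (Fin 1) := Matrix.rank_le_card_width _
        _ = 1 := by simp
    · have : !![(1 : ZMod 2), 0; y, 1 + 1] = !![(1:ZMod 2); y] * !![(1:ZMod 2), 0] := by
        ext i j; fin_cases i <;> fin_cases j <;> simp [Matrix.mul_apply, Fin.sum_univ_succ] <;> decide
      rw [this]
      calc Matrix.rank (!![(1:ZMod 2); y] * !![(1:ZMod 2), 0])
          ≤ Matrix.rank (!![(1 : ZMod 2); y]) := Matrix.rank_mul_le_left _ _
        _ ≤ Fintype.card (Fin 1) := Matrix.rank_le_card_width _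
        _ = 1 := by simp
  · rintro ⟨x, y, h⟩
    have h1 := congrFun (congrFun h 0) 0
    have h2 := congrFun (congrFun h 1) 1
    simp at h1 h2
    rw [← h1] at h2
    simp at h2
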